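/- The antipode intertwines the two modular automorphisms: σ(S(σ'(a))) = S(a) for every a ∈ A. -/

import Mathlib

open TensorProduct HopfAlgebra

section AntipodeMulAux

open TensorProduct HopfAlgebra Coalgebra

variable {A : Type*} [Ring A] [HopfAlgebra ℂ A]

noncomputable section

lemma my_sum_counit_right_smul_left {ι : Type*} (a : A) (r : Repr ℂ a ι) :
    ∑ i ∈ r.index, counit (R := ℂ) (r.right i) • r.left i = a := by
  have h := congrArg (TensorProduct.rid ℂ A) (sum_tmul_counit_eq (R := ℂ) r)
  rw [map_sum] at h
  simp only [TensorProduct.rid_tmul, one_smul] at h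
  exact h

lemma my_sum_counit_left_smul_right {ι : Type*} (a : A) (r : Repr ℂ a ι) :
    ∑ i ∈ r.index, counit (R := ℂ) (r.left i) • r.right i = a := by
  have h := congrArg (TensorProduct.lid ℂ A) (sum_counit_tmul_eq (R := ℂ) r)
  rw [map_sum] at h
  simp only [TensorProduct.lid_tmul, one_smul] at h
  exact h

/-- product of two representations is a representation of the product -/
def myReprMul {ι κ : Type*} {x y : A} (r : Repr ℂ x ι) (s : Repr ℂ y κ) : Repr ℂ (x * y) (ι × κ) where
  index := r.index ×ˢ s.index
  left := fun p => r.left p.1 * s.left p.2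
  right := fun p => r.right p.1 * s.right p.2
  eq := by
    rw [Finset.sum_product]
    show _ = Coalgebra.comul (x * y)
    rw [Bialgebra.comul_mul, ← r.eq, ← s.eq, Finset.sum_mul_sum]
    simp [Algebra.TensorProduct.tmul_mul_tmul]

lemma my_sum_sandwich {ι : Type*} (s : Finset ι) (y u : ι → A) (c : ℂ)
    (h : ∑ l ∈ s, y l * u l = c • 1) (x v : A) :
    ∑ l ∈ s, (x * y l) * (u l * v) = c • (x * v) := by
  calc ∑ l ∈ s, (x * y l) * (u l * v) = ∑ l ∈ s, x * ((y l * u l) * v) := by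
        refine Finset.sum_congr rfl fun l _ => by simp only [mul_assoc]
    _ = x * ∑ l ∈ s, (y l * u l) * v := by rw [Finset.mul_sum]
    _ = x * ((∑ l ∈ s, y l * u l) * v) := by rw [Finset.sum_mul]
    _ = c • (x * v) := by rw [h, smul_mul_assoc, one_mul, mul_smul_comm]

lemma my_antipode_mul (a b : A) :
    antipode (R := ℂ) (a * b) = antipode (R := ℂ) b * antipode (R := ℂ) a := by
  classical
  let ra := ℛ ℂ a
  let rb := ℛ ℂ b
  let ra1 : ∀ i : ra.ι, Repr ℂ (ra.left i) (A × A) := fun i => ℛ ℂ _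
  let ra2 : ∀ i : ra.ι, Repr ℂ (ra.right i) (A × A) := fun i => ℛ ℂ _
  let rb1 : ∀ j : rb.ι, Repr ℂ (rb.left j) (A × A) := fun j => ℛ ℂ _
  let rb2 : ∀ j : rb.ι, Repr ℂ (rb.right j) (A × A) := fun j => ℛ ℂ _
  let S : A →ₗ[ℂ] A := antipode (R := ℂ)
  let m : A ⊗[ℂ] A →ₗ[ℂ] A := LinearMap.mul' ℂ A
  let L : ((A ⊗[ℂ] (A ⊗[ℂ] A)) ⊗[ℂ] (A ⊗[ℂ] (A ⊗[ℂ] A))) →ₗ[ℂ] A :=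
    m ∘ₗ TensorProduct.map (S ∘ₗ m)
        ((m ∘ₗ TensorProduct.map m
            (m ∘ₗ TensorProduct.map S S ∘ₗ (TensorProduct.comm ℂ A A).toLinearMap)) ∘ₗ
          (TensorProduct.tensorTensorTensorComm ℂ A A A A).toLinearMap) ∘ₗ
      (TensorProduct.tensorTensorTensorComm ℂ A (A ⊗[ℂ] A) A (A ⊗[ℂ] A)).toLinearMap
  have hL : ∀ x1 x2 x3 y1 y2 y3 : A,
      L ((x1 ⊗ₜ[ℂ] (x2 ⊗ₜ[ℂ] x3)) ⊗ₜ[ℂ] (y1 ⊗ₜ[ℂ] (y2 ⊗ₜ[ℂ] y3)))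
        = antipode (R := ℂ) (x1 * y1) *
            ((x2 * y2) * (antipode (R := ℂ) y3 * antipode (R := ℂ) x3)) := by
    intro x1 x2 x3 y1 y2 y3
    simp [L, m, S]
  let Xa : A ⊗[ℂ] (A ⊗[ℂ] A) := ∑ i ∈ ra.index, ∑ k ∈ (ra2 i).index,
    ra.left i ⊗ₜ[ℂ] ((ra2 i).left k ⊗ₜ[ℂ] (ra2 i).right k)
  let Ya : A ⊗[ℂ] (A ⊗[ℂ] A) := ∑ i ∈ ra.index, ∑ k ∈ (ra1 i).index,
    (ra1 i).left k ⊗ₜ[ℂ] ((ra1 i).right k ⊗ₜ[ℂ] ra.right i)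
  let Xb : A ⊗[ℂ] (A ⊗[ℂ] A) := ∑ j ∈ rb.index, ∑ l ∈ (rb2 j).index,
    rb.left j ⊗ₜ[ℂ] ((rb2 j).left l ⊗ₜ[ℂ] (rb2 j).right l)
  let Yb : A ⊗[ℂ] (A ⊗[ℂ] A) := ∑ j ∈ rb.index, ∑ l ∈ (rb1 j).index,
    (rb1 j).left l ⊗ₜ[ℂ] ((rb1 j).right l ⊗ₜ[ℂ] rb.right j)
  have hXa : Ya = Xa := sum_tmul_tmul_eq (R := ℂ) ra ra1 ra2
  have hXb : Yb = Xb := sum_tmul_tmul_eq (R := ℂ) rb rb1 rb2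
  -- compute L (Xa ⊗ₜ Xb) = antipode (a * b)
  have compute1 : L (Xa ⊗ₜ[ℂ] Xb) = antipode (R := ℂ) (a * b) := by
    have hexp : Xa ⊗ₜ[ℂ] Xb = ∑ i ∈ ra.index, ∑ k ∈ (ra2 i).index, ∑ j ∈ rb.index,
        ∑ l ∈ (rb2 j).index,
        (ra.left i ⊗ₜ[ℂ] ((ra2 i).left k ⊗ₜ[ℂ] (ra2 i).right k)) ⊗ₜ[ℂ]
          (rb.left j ⊗ₜ[ℂ] ((rb2 j).left l ⊗ₜ[ℂ] (rb2 j).right l)) := by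
      show Xa ⊗ₜ[ℂ] Xb = _
      simp only [Xa, Xb]
      rw [TensorProduct.sum_tmul]
      refine Finset.sum_congr rfl fun i _ => ?_
      rw [TensorProduct.sum_tmul]
      refine Finset.sum_congr rfl fun k _ => ?_
      rw [TensorProduct.tmul_sum]
      exact Finset.sum_congr rfl fun j _ => TensorProduct.tmul_sum _ _ _
    rw [hexp]
    calc
      L (∑ i ∈ ra.index, ∑ k ∈ (ra2 i).index, ∑ j ∈ rb.index, ∑ l ∈ (rb2 j).index,
          (ra.left i ⊗ₜ[ℂ] ((ra2 i).left k ⊗ₜ[ℂ] (ra2 i).right k)) ⊗ₜ[ℂ]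
            (rb.left j ⊗ₜ[ℂ] ((rb2 j).left l ⊗ₜ[ℂ] (rb2 j).right l)))
          = ∑ i ∈ ra.index, ∑ k ∈ (ra2 i).index, ∑ j ∈ rb.index, ∑ l ∈ (rb2 j).index,
            antipode (R := ℂ) (ra.left i * rb.left j) *
              (((ra2 i).left k * (rb2 j).left l) *
                (antipode (R := ℂ) ((rb2 j).right l) *
                  antipode (R := ℂ) ((ra2 i).right k))) := by
        simp only [map_sum]
        exact Finset.sum_congr rfl fun i _ => Finset.sum_congr rfl fun k _ =>
          Finset.sum_congr rfl fun j _ => Finset.sum_congr rfl fun l _ => hL _ _ _ _ _ _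
      _ = ∑ i ∈ ra.index, ∑ j ∈ rb.index, ∑ k ∈ (ra2 i).index, ∑ l ∈ (rb2 j).index,
            ((antipode (R := ℂ) (ra.left i * rb.left j)) * (ra2 i).left k * (rb2 j).left l) *
              (antipode (R := ℂ) ((rb2 j).right l) * antipode (R := ℂ) ((ra2 i).right k)) := by
        refine Finset.sum_congr rfl fun i _ => ?_
        rw [Finset.sum_comm]
        exact Finset.sum_congr rfl fun j _ => Finset.sum_congr rfl fun k _ =>
          Finset.sum_congr rfl fun l _ => by simp only [mul_assoc]
      _ = ∑ i ∈ ra.index, ∑ j ∈ rb.index,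
            (counit (R := ℂ) (ra.right i) * counit (R := ℂ) (rb.right j)) •
              antipode (R := ℂ) (ra.left i * rb.left j) := by
        refine Finset.sum_congr rfl fun i _ => Finset.sum_congr rfl fun j _ => ?_
        have step1 : ∀ k, ∑ l ∈ (rb2 j).index,
            ((antipode (R := ℂ) (ra.left i * rb.left j)) * (ra2 i).left k * (rb2 j).left l) *
              (antipode (R := ℂ) ((rb2 j).right l) * antipode (R := ℂ) ((ra2 i).right k))
            = counit (R := ℂ) (rb.right j) •
                ((antipode (R := ℂ) (ra.left i * rb.left j)) * (ra2 i).left k *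
                  antipode (R := ℂ) ((ra2 i).right k)) := fun k =>
          my_sum_sandwich _ _ _ _ (sum_mul_antipode_eq_smul (rb2 j)) _ _
        rw [Finset.sum_congr rfl fun k _ => step1 k, ← Finset.smul_sum]
        have step2 : ∑ k ∈ (ra2 i).index,
            (antipode (R := ℂ) (ra.left i * rb.left j)) * (ra2 i).left k *
              antipode (R := ℂ) ((ra2 i).right k)
            = counit (R := ℂ) (ra.right i) • antipode (R := ℂ) (ra.left i * rb.left j) := by
          calc ∑ k ∈ (ra2 i).index,
              (antipode (R := ℂ) (ra.left i * rb.left j)) * (ra2 i).left k *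
                antipode (R := ℂ) ((ra2 i).right k)
              = (antipode (R := ℂ) (ra.left i * rb.left j)) *
                  ∑ k ∈ (ra2 i).index, (ra2 i).left k * antipode (R := ℂ) ((ra2 i).right k) := by
                rw [Finset.mul_sum]
                exact Finset.sum_congr rfl fun k _ => by rw [mul_assoc]
            _ = _ := by rw [sum_mul_antipode_eq_smul (ra2 i), mul_smul_comm, mul_one]
        rw [step2, smul_smul, mul_comm]
      _ = antipode (R := ℂ) (a * b) := by
        have : ∑ i ∈ ra.index, ∑ j ∈ rb.index,
            (counit (R := ℂ) (ra.right i) * counit (R := ℂ) (rb.right j)) •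
              antipode (R := ℂ) (ra.left i * rb.left j)
            = antipode (R := ℂ) ((∑ i ∈ ra.index, counit (R := ℂ) (ra.right i) • ra.left i) *
                (∑ j ∈ rb.index, counit (R := ℂ) (rb.right j) • rb.left j)) := by
          rw [Finset.sum_mul_sum, map_sum]
          refine Finset.sum_congr rfl fun i _ => ?_
          rw [map_sum]
          exact Finset.sum_congr rfl fun j _ => by
            rw [smul_mul_smul_comm, map_smul]
        rw [this, my_sum_counit_right_smul_left a ra, my_sum_counit_right_smul_left b rb]
  -- compute L (Ya ⊗ₜ Yb) = antipode b * antipode a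
  have compute2 : L (Ya ⊗ₜ[ℂ] Yb) = antipode (R := ℂ) b * antipode (R := ℂ) a := by
    have hexp : Ya ⊗ₜ[ℂ] Yb = ∑ i ∈ ra.index, ∑ k ∈ (ra1 i).index, ∑ j ∈ rb.index,
        ∑ l ∈ (rb1 j).index,
        ((ra1 i).left k ⊗ₜ[ℂ] ((ra1 i).right k ⊗ₜ[ℂ] ra.right i)) ⊗ₜ[ℂ]
          ((rb1 j).left l ⊗ₜ[ℂ] ((rb1 j).right l ⊗ₜ[ℂ] rb.right j)) := by
      show Ya ⊗ₜ[ℂ] Yb = _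
      simp only [Ya, Yb]
      rw [TensorProduct.sum_tmul]
      refine Finset.sum_congr rfl fun i _ => ?_
      rw [TensorProduct.sum_tmul]
      refine Finset.sum_congr rfl fun k _ => ?_
      rw [TensorProduct.tmul_sum]
      exact Finset.sum_congr rfl fun j _ => TensorProduct.tmul_sum _ _ _
    rw [hexp]
    calc
      L (∑ i ∈ ra.index, ∑ k ∈ (ra1 i).index, ∑ j ∈ rb.index, ∑ l ∈ (rb1 j).index,
          ((ra1 i).left k ⊗ₜ[ℂ] ((ra1 i).right k ⊗ₜ[ℂ] ra.right i)) ⊗ₜ[ℂ]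
            ((rb1 j).left l ⊗ₜ[ℂ] ((rb1 j).right l ⊗ₜ[ℂ] rb.right j)))
          = ∑ i ∈ ra.index, ∑ k ∈ (ra1 i).index, ∑ j ∈ rb.index, ∑ l ∈ (rb1 j).index,
            antipode (R := ℂ) ((ra1 i).left k * (rb1 j).left l) *
              (((ra1 i).right k * (rb1 j).right l) *
                (antipode (R := ℂ) (rb.right j) * antipode (R := ℂ) (ra.right i))) := by
        simp only [map_sum]
        exact Finset.sum_congr rfl fun i _ => Finset.sum_congr rfl fun k _ =>
          Finset.sum_congr rfl fun j _ => Finset.sum_congr rfl fun l _ => hL _ _ _ _ _ _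
      _ = ∑ i ∈ ra.index, ∑ j ∈ rb.index, ∑ k ∈ (ra1 i).index, ∑ l ∈ (rb1 j).index,
            (antipode (R := ℂ) ((ra1 i).left k * (rb1 j).left l) *
              ((ra1 i).right k * (rb1 j).right l)) *
                (antipode (R := ℂ) (rb.right j) * antipode (R := ℂ) (ra.right i)) := by
        refine Finset.sum_congr rfl fun i _ => ?_
        rw [Finset.sum_comm]
        exact Finset.sum_congr rfl fun j _ => Finset.sum_congr rfl fun k _ =>
          Finset.sum_congr rfl fun l _ => by simp only [mul_assoc]
      _ = ∑ i ∈ ra.index, ∑ j ∈ rb.index,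
            (counit (R := ℂ) (ra.left i) * counit (R := ℂ) (rb.left j)) •
              (antipode (R := ℂ) (rb.right j) * antipode (R := ℂ) (ra.right i)) := by
        refine Finset.sum_congr rfl fun i _ => Finset.sum_congr rfl fun j _ => ?_
        have key : ∑ k ∈ (ra1 i).index, ∑ l ∈ (rb1 j).index,
            antipode (R := ℂ) ((ra1 i).left k * (rb1 j).left l) *
              ((ra1 i).right k * (rb1 j).right l)
            = (counit (R := ℂ) (ra.left i) * counit (R := ℂ) (rb.left j)) • (1 : A) := by
          have h := sum_antipode_mul_eq_smul (myReprMul (ra1 i) (rb1 j))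
          simp only [myReprMul] at h
          rw [Finset.sum_product] at h
          rw [h, Bialgebra.counit_mul]
        have hfac : ∑ k ∈ (ra1 i).index, ∑ l ∈ (rb1 j).index,
            (antipode (R := ℂ) ((ra1 i).left k * (rb1 j).left l) *
              ((ra1 i).right k * (rb1 j).right l)) *
                (antipode (R := ℂ) (rb.right j) * antipode (R := ℂ) (ra.right i))
            = (∑ k ∈ (ra1 i).index, ∑ l ∈ (rb1 j).index,
                antipode (R := ℂ) ((ra1 i).left k * (rb1 j).left l) *
                  ((ra1 i).right k * (rb1 j).right l)) *
                (antipode (R := ℂ) (rb.right j) * antipode (R := ℂ) (ra.right i)) := by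
          rw [Finset.sum_mul]
          exact Finset.sum_congr rfl fun k _ => by rw [Finset.sum_mul]
        rw [hfac, key, smul_mul_assoc, one_mul]
      _ = antipode (R := ℂ) b * antipode (R := ℂ) a := by
        rw [Finset.sum_comm]
        have : ∑ j ∈ rb.index, ∑ i ∈ ra.index,
            (counit (R := ℂ) (ra.left i) * counit (R := ℂ) (rb.left j)) •
              (antipode (R := ℂ) (rb.right j) * antipode (R := ℂ) (ra.right i))
            = (∑ j ∈ rb.index, counit (R := ℂ) (rb.left j) • antipode (R := ℂ) (rb.right j)) *
                (∑ i ∈ ra.index, counit (R := ℂ) (ra.left i) • antipode (R := ℂ) (ra.right i)) := by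
          rw [Finset.sum_mul_sum]
          exact Finset.sum_congr rfl fun j _ => Finset.sum_congr rfl fun i _ => by
            rw [smul_mul_smul_comm, mul_comm (counit (R := ℂ) (rb.left j))]
        rw [this]
        have ha : ∑ i ∈ ra.index, counit (R := ℂ) (ra.left i) • antipode (R := ℂ) (ra.right i)
            = antipode (R := ℂ) a := by
          calc ∑ i ∈ ra.index, counit (R := ℂ) (ra.left i) • antipode (R := ℂ) (ra.right i)
              = ∑ i ∈ ra.index, antipode (R := ℂ) (counit (R := ℂ) (ra.left i) • ra.right i) :=
                Finset.sum_congr rfl fun i _ => (map_smul _ _ _).symm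
            _ = antipode (R := ℂ) (∑ i ∈ ra.index, counit (R := ℂ) (ra.left i) • ra.right i) :=
                (map_sum _ _ _).symm
            _ = antipode (R := ℂ) a := by rw [my_sum_counit_left_smul_right a ra]
        have hb : ∑ j ∈ rb.index, counit (R := ℂ) (rb.left j) • antipode (R := ℂ) (rb.right j)
            = antipode (R := ℂ) b := by
          calc ∑ j ∈ rb.index, counit (R := ℂ) (rb.left j) • antipode (R := ℂ) (rb.right j)
              = ∑ j ∈ rb.index, antipode (R := ℂ) (counit (R := ℂ) (rb.left j) • rb.right j) :=
                Finset.sum_congr rfl fun j _ => (map_smul _ _ _).symm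
            _ = antipode (R := ℂ) (∑ j ∈ rb.index, counit (R := ℂ) (rb.left j) • rb.right j) :=
                (map_sum _ _ _).symm
            _ = antipode (R := ℂ) b := by rw [my_sum_counit_left_smul_right b rb]
        rw [ha, hb]
  rw [← compute1, ← hXa, ← hXb, compute2]

end
end AntipodeMulAux

/-- The antipode intertwines the modular automorphisms of the left integral `φ` and of the
right integral `ψ = φ ∘ S`: `σ(S(σ'(a))) = S(a)` for all `a`. -/
theorem antipode_intertwines_modular_automorphisms
    {A : Type*} [Ring A] [HopfAlgebra ℂ A]
    (hS : Function.Bijective (antipode (R := ℂ) (A := A)))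
    (φ : A →ₗ[ℂ] ℂ) (hφ0 : φ ≠ 0)
    (hφL : ∀ a : A,
      (TensorProduct.rid ℂ A) (LinearMap.lTensor A φ (Coalgebra.comul a)) = φ a • (1 : A))
    (hφf1 : ∀ a : A, (∀ b : A, φ (a * b) = 0) → a = 0)
    (hφf2 : ∀ a : A, (∀ b : A, φ (b * a) = 0) → a = 0)
    (σ : A ≃ₐ[ℂ] A) (hσ : ∀ a b : A, φ (a * b) = φ (b * σ a))
    (hψR : ∀ a : A,
      (TensorProduct.lid ℂ A) (LinearMap.rTensor A (φ ∘ₗ antipode (R := ℂ))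
        (Coalgebra.comul a)) = φ (antipode (R := ℂ) a) • (1 : A))
    (σ' : A ≃ₐ[ℂ] A)
    (hσ' : ∀ a b : A, φ (antipode (R := ℂ) (a * b)) = φ (antipode (R := ℂ) (b * σ' a))) :
    ∀ a : A, σ (antipode (R := ℂ) (σ' a)) = antipode (R := ℂ) a := by
  intro a
  have key : ∀ b : A, φ (b * (σ (antipode (R := ℂ) (σ' a)) - antipode (R := ℂ) a)) = 0 := by
    intro b'
    obtain ⟨c, rfl⟩ := hS.surjective b'
    have h1 : φ (antipode (R := ℂ) c * σ (antipode (R := ℂ) (σ' a)))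
        = φ (antipode (R := ℂ) (σ' a) * antipode (R := ℂ) c) := (hσ _ _).symm
    have h2 : antipode (R := ℂ) (σ' a) * antipode (R := ℂ) c
        = antipode (R := ℂ) (c * σ' a) := (my_antipode_mul c (σ' a)).symm
    have h3 : φ (antipode (R := ℂ) (c * σ' a)) = φ (antipode (R := ℂ) (a * c)) :=
      (hσ' a c).symm
    have h4 : antipode (R := ℂ) (a * c) = antipode (R := ℂ) c * antipode (R := ℂ) a :=
      my_antipode_mul a c
    have : φ (antipode (R := ℂ) c * σ (antipode (R := ℂ) (σ' a)))
        = φ (antipode (R := ℂ) c * antipode (R := ℂ) a) := by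
      rw [h1, h2, h3, h4]
    rw [mul_sub, map_sub, this, sub_self]
  exact sub_eq_zero.mp (hφf2 _ key)
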